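/- arXiv:1201.4670 — 2 statements merged into one kernel-verified Lean document; each statement's English description precedes it below -/
import Mathlib

section
/- Assume the family (r_j)_{j∈ℤ³} is independent, each with law ν, and that there exist κ > 0, a point v with the ball B_κ(v) contained in W, and two distinct indices i ≠ j in ℤ³, such that ν(A) ≥ κ·λ(A) for every Borel set A ⊆ (B_κ(v) − i) ∪ (B_κ(v) − j). Then P(i + r_i ∈ W) > 0, and there exists a constant c > 0 (depending on ν, κ, i and j) such that for every 0 < ε < κ/2 one has P(i + r_i ∈ W and δ_i ≤ ε) ≥ c·ε³·P(i + r_i ∈ W). -/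
open MeasureTheory ProbabilityTheory ENNReal

noncomputable section

/-- `ℝ³` with the Euclidean norm. -/
abbrev E3 := EuclideanSpace ℝ (Fin 3)

/-- The lattice point `j ∈ ℤ³` viewed in `ℝ³`. -/
def latt (j : Fin 3 → ℤ) : E3 := (EuclideanSpace.equiv (Fin 3) ℝ).symm (fun i => (j i : ℝ))

/-- The semi-open unit cube `W = [-1/2, 1/2)³`. -/
def Wcube : Set E3 := {x | ∀ i, -(1:ℝ)/2 ≤ x i ∧ x i < 1/2}

/-- The distance (in `[0,∞]`) from the perturbed lattice point `i + r_i(ω)` to its nearest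
neighbor: `δ_i(ω) = inf_{k ≠ i} |i + r_i(ω) − k − r_k(ω)|`. -/
def nnd {Ω : Type*} (r : (Fin 3 → ℤ) → Ω → E3) (i : Fin 3 → ℤ) (ω : Ω) : ℝ≥0∞ :=
  ⨅ k : {k : Fin 3 → ℤ // k ≠ i},
    edist (latt i + r i ω) (latt (k : Fin 3 → ℤ) + r (k : Fin 3 → ℤ) ω)

lemma Wcube_measurable : MeasurableSet Wcube := by
  have : Wcube = ⋂ k : Fin 3, (fun x : E3 => x k) ⁻¹' (Set.Ico (-(1:ℝ)/2) (1/2)) := by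
    ext x; simp [Wcube, Set.mem_iInter, Set.mem_Ico]
  rw [this]
  exact MeasurableSet.iInter fun k =>
    ((EuclideanSpace.proj k : E3 →L[ℝ] ℝ).continuous.measurable) measurableSet_Ico

lemma ball_preimage' (w z : E3) (ρ : ℝ) :
    (fun x => x + z) ⁻¹' Metric.ball w ρ = Metric.ball (w - z) ρ := by
  ext x
  simp only [Set.mem_preimage, Metric.mem_ball, dist_eq_norm]
  have : x + z - w = x - (w - z) := by abel
  rw [this]

set_option maxHeartbeats 1000000 in
/-- Under independence and the local lower bound `ν ≥ κ·λ` on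
`(B_κ(v) − i) ∪ (B_κ(v) − j)` with `B_κ(v) ⊆ W` and `i ≠ j`, one has
`P(i + r_i ∈ W) > 0` and there is `c > 0` such that for every `0 < ε < κ/2`,
`P(i + r_i ∈ W and δ_i ≤ ε) ≥ c·ε³·P(i + r_i ∈ W)`. -/
theorem prob_small_delta_lower_bound
    (ν : Measure E3) [IsProbabilityMeasure ν]
    {Ω : Type*} [MeasurableSpace Ω] (P : Measure Ω) [IsProbabilityMeasure P]
    (r : (Fin 3 → ℤ) → Ω → E3) (hmeas : ∀ j, Measurable (r j))
    (hindep : iIndepFun r P)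
    (hlaw : ∀ j, P.map (r j) = ν)
    (κ : ℝ) (hκ : 0 < κ) (v : E3) (hball : Metric.ball v κ ⊆ Wcube)
    (i j : Fin 3 → ℤ) (hij : i ≠ j)
    (hlower : ∀ A : Set E3, MeasurableSet A →
        A ⊆ ((fun x => x + latt i) ⁻¹' Metric.ball v κ) ∪
            ((fun x => x + latt j) ⁻¹' Metric.ball v κ) →
        ENNReal.ofReal κ * volume A ≤ ν A) :
    0 < P {ω | latt i + r i ω ∈ Wcube} ∧
      ∃ c : ℝ, 0 < c ∧ ∀ ε : ℝ, 0 < ε → ε < κ / 2 →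
        ENNReal.ofReal (c * ε ^ 3) * P {ω | latt i + r i ω ∈ Wcube}
          ≤ P {ω | latt i + r i ω ∈ Wcube ∧ nnd r i ω ≤ ENNReal.ofReal ε} := by
  classical
  set V : ℝ≥0∞ := volume (Metric.ball (0 : E3) 1) with hV
  have hVpos : 0 < V := Metric.measure_ball_pos _ _ one_pos
  have hVne : V ≠ ⊤ := measure_ball_lt_top.ne
  have hVtpos : 0 < V.toReal := ENNReal.toReal_pos hVpos.ne' hVne
  -- the set WA = {x | latt i + x ∈ W}
  set WA : Set E3 := (fun x => latt i + x) ⁻¹' Wcube with hWA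
  have hWAmeas : MeasurableSet WA :=
    (measurable_id.const_add (latt i)) Wcube_measurable
  have hevent : {ω | latt i + r i ω ∈ Wcube} = r i ⁻¹' WA := rfl
  have hPA : P {ω | latt i + r i ω ∈ Wcube} = ν WA := by
    rw [hevent, ← hlaw i, Measure.map_apply (hmeas i) hWAmeas]
  -- small ball S of radius κ/2 around v - latt i
  set S : Set E3 := Metric.ball (v - latt i) (κ/2) with hS
  have hSmeas : MeasurableSet S := measurableSet_ball
  have hSsub : S ⊆ (fun x => x + latt i) ⁻¹' Metric.ball v κ := by
    rw [ball_preimage']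
    exact Metric.ball_subset_ball (by linarith)
  have hSν : ENNReal.ofReal κ * volume S ≤ ν S :=
    hlower S hSmeas (hSsub.trans Set.subset_union_left)
  have hSpos : 0 < ν S := by
    refine lt_of_lt_of_le ?_ hSν
    exact ENNReal.mul_pos (by simp [hκ]) (Metric.measure_ball_pos _ _ (by linarith)).ne'
  have hSfin : ν S ≠ ⊤ := (measure_lt_top ν S).ne
  set m : ℝ := (ν S).toReal with hm
  have hmpos : 0 < m := ENNReal.toReal_pos hSpos.ne' hSfin
  -- S is contained in WA (after the translations)
  have hSWA : S ⊆ WA := by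
    intro x hx
    have hx' : x + latt i ∈ Metric.ball v κ := hSsub hx
    simp only [hWA, Set.mem_preimage]
    rw [add_comm]
    exact hball hx'
  -- Part 1
  have hνWA : 0 < ν WA := hSpos.trans_le (measure_mono hSWA)
  refine ⟨by rw [hPA]; exact hνWA, ?_⟩
  -- the constant
  refine ⟨κ * V.toReal * m, by positivity, ?_⟩
  intro ε hε hεκ
  -- the joint event
  set T : Set (E3 × E3) :=
    {p | p.1 ∈ S ∧ p.2 ∈ Metric.ball (latt i + p.1 - latt j) ε} with hT
  have hTmeas : MeasurableSet T := by
    have h1 : MeasurableSet {p : E3 × E3 | p.1 ∈ S} := measurable_fst hSmeas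
    have h2 : IsOpen {p : E3 × E3 | p.2 ∈ Metric.ball (latt i + p.1 - latt j) ε} := by
      have hc : Continuous fun p : E3 × E3 => dist p.2 (latt i + p.1 - latt j) :=
        continuous_snd.dist ((continuous_const.add continuous_fst).sub continuous_const)
      exact isOpen_lt hc continuous_const
    exact h1.inter h2.measurableSet
  -- the joint law is the product measure
  have hpair : P.map (fun ω => (r i ω, r j ω)) = ν.prod ν := by
    have h := (indepFun_iff_map_prod_eq_prod_map_map (hmeas i).aemeasurable
      (hmeas j).aemeasurable).mp (hindep.indepFun hij)
    rw [h, hlaw i, hlaw j]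
  have hPjoint : P ((fun ω => (r i ω, r j ω)) ⁻¹' T) = (ν.prod ν) T := by
    rw [← hpair, Measure.map_apply ((hmeas i).prodMk (hmeas j)) hTmeas]
  -- the joint event is contained in the target event
  have hsub : (fun ω => (r i ω, r j ω)) ⁻¹' T
      ⊆ {ω | latt i + r i ω ∈ Wcube ∧ nnd r i ω ≤ ENNReal.ofReal ε} := by
    rintro ω ⟨h1, h2⟩
    have hW : latt i + r i ω ∈ Wcube := by
      rw [add_comm]; exact hball (hSsub h1)
    refine ⟨hW, ?_⟩
    have hd : dist (latt j + r j ω) (latt i + r i ω) < ε := by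
      have := h2
      simp only [Metric.mem_ball] at this
      have heq : latt j + (latt i + r i ω - latt j) = latt i + r i ω := by abel
      calc dist (latt j + r j ω) (latt i + r i ω)
          = dist (latt j + r j ω) (latt j + (latt i + r i ω - latt j)) := by rw [heq]
        _ = dist (r j ω) (latt i + r i ω - latt j) := dist_add_left _ _ _
        _ < ε := this
    have hle : edist (latt i + r i ω) (latt j + r j ω) ≤ ENNReal.ofReal ε := by
      rw [edist_dist, dist_comm]
      exact ENNReal.ofReal_le_ofReal hd.le
    have hinf : nnd r i ω ≤ edist (latt i + r i ω) (latt j + r j ω) :=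
      iInf_le (fun k : {k : Fin 3 → ℤ // k ≠ i} =>
        edist (latt i + r i ω) (latt (k : Fin 3 → ℤ) + r (k : Fin 3 → ℤ) ω)) ⟨j, hij.symm⟩
    exact hinf.trans hle
  -- lower bound on the product measure of T
  set C : ℝ≥0∞ := ENNReal.ofReal κ * (ENNReal.ofReal (ε ^ 3) * V) with hC
  have hslice : ∀ x : E3, S.indicator (fun _ => C) x ≤ ν (Prod.mk x ⁻¹' T) := by
    intro x
    by_cases hx : x ∈ S
    · rw [Set.indicator_of_mem hx]
      have hsl : Prod.mk x ⁻¹' T = Metric.ball (latt i + x - latt j) ε := by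
        ext y; simp [hT, hx]
      rw [hsl]
      -- the ε-ball is inside (· + latt j) ⁻¹' ball v κ
      have hsub2 : Metric.ball (latt i + x - latt j) ε
          ⊆ (fun y => y + latt j) ⁻¹' Metric.ball v κ := by
        rw [ball_preimage']
        intro y hy
        simp only [Metric.mem_ball] at hy ⊢
        have hx2 : dist (latt i + x - latt j) (v - latt j) < κ / 2 := by
          have : dist (latt i + x - latt j) (v - latt j) = dist x (v - latt i) := by
            rw [dist_eq_norm, dist_eq_norm]
            congr 1
            abel
          rw [this]
          exact hx
        calc dist y (v - latt j) ≤ dist y (latt i + x - latt j)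
              + dist (latt i + x - latt j) (v - latt j) := dist_triangle _ _ _
          _ < ε + κ / 2 := by linarith
          _ ≤ κ := by linarith
      have := hlower _ measurableSet_ball (hsub2.trans Set.subset_union_right)
      refine le_trans ?_ this
      rw [Measure.addHaar_ball _ _ hε.le, finrank_euclideanSpace_fin]
    · rw [Set.indicator_of_notMem hx]
      exact zero_le
  have hTlb : C * ν S ≤ (ν.prod ν) T := by
    rw [Measure.prod_apply hTmeas]
    calc C * ν S = ∫⁻ x, S.indicator (fun _ => C) x ∂ν := by
          rw [lintegral_indicator hSmeas _, setLIntegral_const, mul_comm]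
      _ ≤ ∫⁻ x, ν (Prod.mk x ⁻¹' T) ∂ν := lintegral_mono hslice
  -- identify the constant
  have hCeq : ENNReal.ofReal (κ * V.toReal * m * ε ^ 3) = C * ν S := by
    rw [ENNReal.ofReal_mul (by positivity), ENNReal.ofReal_mul (by positivity),
      ENNReal.ofReal_mul hκ.le, ENNReal.ofReal_toReal hVne, hm,
      ENNReal.ofReal_toReal hSfin, hC]
    ring
  -- put everything together
  calc ENNReal.ofReal (κ * V.toReal * m * ε ^ 3) * P {ω | latt i + r i ω ∈ Wcube}
      ≤ ENNReal.ofReal (κ * V.toReal * m * ε ^ 3) * 1 :=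
        mul_le_mul_right prob_le_one _
    _ = C * ν S := by rw [mul_one, hCeq]
    _ ≤ (ν.prod ν) T := hTlb
    _ = P ((fun ω => (r i ω, r j ω)) ⁻¹' T) := hPjoint.symm
    _ ≤ P {ω | latt i + r i ω ∈ Wcube ∧ nnd r i ω ≤ ENNReal.ofReal ε} :=
        measure_mono hsub
end
end

section
/- Let (r_j)_{j∈ℤ³} be independent, each with law ν. Then for every i ∈ ℤ³ and every ε > 0, P(i + r_i ∈ W and δ_i > ε) ≤ ∫_{W − i} exp(− Σ_{k ∈ ℤ³, k ≠ i} ν(B̄_ε(i + y − k))) dν(y), where B̄_ε(x) denotes the closed ball of radius ε centered at x. -/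
open MeasureTheory ProbabilityTheory ENNReal

noncomputable section

/-- The exponential `x ↦ e^{-x}` for `x ∈ [0,∞]`, with `e^{-∞} = 0`. -/
def eexp (x : ℝ≥0∞) : ℝ≥0∞ :=
  if x = ⊤ then 0 else ENNReal.ofReal (Real.exp (-x.toReal))

open Filter Topology

lemma measurable_eexp : Measurable eexp := by
  unfold eexp
  apply Measurable.ite (by simp [MeasurableSet.singleton, Set.setOf_eq_eq_singleton]) measurable_const
  exact ENNReal.measurable_ofReal.comp ((Real.continuous_exp.measurable).comp
    (ENNReal.measurable_toReal.neg))

lemma eexp_anti : Antitone eexp := by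
  intro a b hab
  unfold eexp
  by_cases hb : b = ⊤
  · simp [hb]
  · have ha : a ≠ ⊤ := fun h => hb (top_le_iff.mp (h ▸ hab))
    simp only [ha, hb, if_neg]
    exact ENNReal.ofReal_le_ofReal (Real.exp_le_exp.mpr (neg_le_neg
      (ENNReal.toReal_mono hb hab)))

lemma one_sub_le_eexp (a : ℝ≥0∞) : 1 - a ≤ eexp a := by
  by_cases ha : a = ⊤
  · simp [ha, eexp, tsub_eq_zero_of_le]
  by_cases h1 : 1 ≤ a
  · simp [tsub_eq_zero_of_le h1]
  push_neg at h1
  have : (1 : ℝ≥0∞) - a = ENNReal.ofReal (1 - a.toReal) := by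
    rw [ENNReal.ofReal_sub _ ENNReal.toReal_nonneg, ENNReal.ofReal_one,
      ENNReal.ofReal_toReal ha]
  rw [eexp, if_neg ha, this]
  exact ENNReal.ofReal_le_ofReal (by linarith [Real.add_one_le_exp (-a.toReal)])

lemma eexp_add {a b : ℝ≥0∞} (ha : a ≠ ⊤) (hb : b ≠ ⊤) : eexp (a + b) = eexp a * eexp b := by
  rw [eexp, eexp, eexp, if_neg ha, if_neg hb, if_neg (by simp [ENNReal.add_ne_top, ha, hb]),
    ENNReal.toReal_add ha hb, neg_add, Real.exp_add,
    ENNReal.ofReal_mul (Real.exp_nonneg _)]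

lemma prod_one_sub_le_eexp_sum {α : Type*} (F : Finset α) (t : α → ℝ≥0∞)
    (ht : ∀ k, t k ≠ ⊤) :
    ∏ k ∈ F, (1 - t k) ≤ eexp (∑ k ∈ F, t k) := by
  classical
  induction F using Finset.induction with
  | empty => simp [eexp]
  | insert _ _ hk ih =>
    rw [Finset.prod_insert hk, Finset.sum_insert hk,
      eexp_add (ht _) (by exact (ENNReal.sum_lt_top.mpr fun k _ => (ht k).lt_top).ne)]
    exact mul_le_mul' (one_sub_le_eexp _) ih

lemma eexp_tendsto {s : ℕ → ℝ≥0∞} {L : ℝ≥0∞} (hfin : ∀ n, s n ≠ ⊤)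
    (hs : Tendsto s atTop (𝓝 L)) :
    Tendsto (fun n => eexp (s n)) atTop (𝓝 (eexp L)) := by
  by_cases hL : L = ⊤
  · subst hL
    have htoReal : Tendsto (fun n => (s n).toReal) atTop atTop := by
      rw [tendsto_atTop]
      intro M
      have : ∀ᶠ n in atTop, ENNReal.ofReal (max M 0) < s n :=
        hs (eventually_gt_nhds (by simp [ENNReal.ofReal_lt_top]) : ∀ᶠ x in 𝓝 ⊤, ENNReal.ofReal (max M 0) < x)
      filter_upwards [this] with n hn
      exact le_of_lt (lt_of_le_of_lt (le_max_left _ _)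
        ((ENNReal.ofReal_lt_iff_lt_toReal (le_max_right _ _) (hfin n)).mp hn))
    have : Tendsto (fun n => Real.exp (-(s n).toReal)) atTop (𝓝 0) :=
      Real.tendsto_exp_atBot.comp (tendsto_neg_atBot_iff.mpr htoReal)
    have h2 : Tendsto (fun n => ENNReal.ofReal (Real.exp (-(s n).toReal))) atTop (𝓝 0) := by
      simpa [Function.comp_def] using (ENNReal.continuous_ofReal.tendsto 0).comp this
    simp only [eexp, if_pos rfl]
    refine h2.congr fun n => by rw [if_neg (hfin n)]
  · have h1 : Tendsto (fun n => (s n).toReal) atTop (𝓝 L.toReal) :=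
      (ENNReal.tendsto_toReal hL).comp hs
    have h2 : Tendsto (fun n => ENNReal.ofReal (Real.exp (-(s n).toReal))) atTop
        (𝓝 (ENNReal.ofReal (Real.exp (-L.toReal)))) :=
      (ENNReal.continuous_ofReal.tendsto _).comp ((Real.continuous_exp.tendsto _).comp h1.neg)
    simp only [eexp, if_neg hL]
    refine h2.congr fun n => by rw [if_neg (hfin n)]


lemma measurable_ballMeas (ν : Measure E3) [IsProbabilityMeasure ν] (c : E3 → E3)
    (hc : Measurable c) (ε : ℝ) :
    Measurable fun y => ν (Metric.closedBall (c y) ε) := by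
  have h : MeasurableSet {p : E3 × E3 | dist p.2 (c p.1) ≤ ε} :=
    measurableSet_le (measurable_snd.dist (hc.comp measurable_fst)) measurable_const
  have h2 := measurable_measure_prodMk_left (ν := ν) h
  have : ∀ y, Metric.closedBall (c y) ε = Prod.mk y ⁻¹' {p : E3 × E3 | dist p.2 (c p.1) ≤ ε} := by
    intro y; ext z; simp [Metric.mem_closedBall]
  simpa [this] using h2

lemma key_eq (ν : Measure E3) [IsProbabilityMeasure ν]
    {Ω : Type*} [MeasurableSpace Ω] (P : Measure Ω) [IsProbabilityMeasure P]
    (r : (Fin 3 → ℤ) → Ω → E3) (hmeas : ∀ j, Measurable (r j))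
    (hindep : iIndepFun r P)
    (hlaw : ∀ j, P.map (r j) = ν)
    (i : Fin 3 → ℤ) (ε : ℝ)
    (S : Set E3) (hS : MeasurableSet S) :
    ∀ (F : Finset (Fin 3 → ℤ)), i ∉ F → ∀ (f : E3 → ℝ≥0∞), Measurable f →
    ∫⁻ ω in {ω | r i ω ∈ S ∧ ∀ k ∈ F, ε < dist (latt i + r i ω) (latt k + r k ω)}, f (r i ω) ∂P
      = ∫⁻ y in S, f y * ∏ k ∈ F, (1 - ν (Metric.closedBall (latt i + y - latt k) ε)) ∂ν := by
  classical
  intro F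
  induction F using Finset.induction with
  | empty =>
    intro _ f hf
    simp only [Finset.notMem_empty, false_implies, implies_true, and_true,
      Finset.prod_empty, mul_one]
    rw [← hlaw i]
    exact (setLIntegral_map hS hf (hmeas i)).symm
  | @insert k₀ F hk₀F ih =>
    intro hiIns f hf
    have hik₀ : i ≠ k₀ := fun h => hiIns (h ▸ Finset.mem_insert_self k₀ F)
    have hiF : i ∉ F := fun h => hiIns (Finset.mem_insert_of_mem h)
    set g : Ω → E3 × ({x // x ∈ F} → E3) :=
      fun ω => (r i ω, fun k => r k.1 ω) with hg_def
    have hg : Measurable g :=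
      (hmeas i).prodMk (measurable_pi_lambda _ fun k => hmeas k.1)
    have h1 : IndepFun (fun ω (k : (insert i F : Finset (Fin 3 → ℤ))) => r k.1 ω)
        (fun ω (k : ({k₀} : Finset (Fin 3 → ℤ))) => r k.1 ω) P := by
      apply hindep.indepFun_finset _ _ _ hmeas
      simp only [Finset.disjoint_singleton_right, Finset.mem_insert]
      push_neg
      exact ⟨hik₀.symm, hk₀F⟩
    have hgk : IndepFun g (r k₀) P := by
      have := h1.comp (_mγ := inferInstance) (_mγ' := inferInstance) (φ := fun v : ({x // x ∈ (insert i F : Finset (Fin 3 → ℤ))} → E3) =>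
          ((v ⟨i, Finset.mem_insert_self i F⟩, fun k : {x // x ∈ F} =>
            v ⟨k.1, Finset.mem_insert_of_mem k.2⟩) : E3 × ({x // x ∈ F} → E3)))
        (ψ := fun v : ({x // x ∈ ({k₀} : Finset (Fin 3 → ℤ))} → E3) =>
          v ⟨k₀, Finset.mem_singleton_self k₀⟩)
        ((measurable_pi_apply _).prodMk (measurable_pi_lambda _ fun k => measurable_pi_apply _))
        (measurable_pi_apply _)
      exact this
    have : IsProbabilityMeasure (P.map g) := Measure.isProbabilityMeasure_map hg.aemeasurable
    have hmap : P.map (fun ω => (g ω, r k₀ ω)) = (P.map g).prod ν := by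
      rw [← hlaw k₀]
      exact (indepFun_iff_map_prod_eq_prod_map_map hg.aemeasurable
        (hmeas k₀).aemeasurable).mp hgk
    set c : E3 → E3 := fun y => latt i + y - latt k₀ with hc_def
    have hc : Measurable c := (measurable_const.add measurable_id).sub measurable_const
    set B : Set (E3 × ({x // x ∈ F} → E3)) :=
      {p | p.1 ∈ S} ∩ ⋂ k : {x // x ∈ F},
        {p | ε < dist (latt i + p.1) (latt k.1 + p.2 k)} with hB_def
    set A : Set ((E3 × ({x // x ∈ F} → E3)) × E3) :=
      {q | q.1 ∈ B} ∩ {q | ε < dist (latt i + q.1.1) (latt k₀ + q.2)} with hA_def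
    have hB : MeasurableSet B := by
      apply (measurable_fst hS).inter
      apply MeasurableSet.iInter
      intro k
      exact measurableSet_lt measurable_const
        ((measurable_const.add measurable_fst).dist
          (measurable_const.add ((measurable_pi_apply k).comp measurable_snd)))
    have hA : MeasurableSet A := by
      apply (measurable_fst hB).inter
      exact measurableSet_lt measurable_const
        ((measurable_const.add measurable_fst.fst).dist (measurable_const.add measurable_snd))
    set E' : Set Ω := {ω | r i ω ∈ S ∧
      ∀ k ∈ insert k₀ F, ε < dist (latt i + r i ω) (latt k + r k ω)} with hE'_def
    set EF : Set Ω := {ω | r i ω ∈ S ∧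
      ∀ k ∈ F, ε < dist (latt i + r i ω) (latt k + r k ω)} with hEF_def
    have measEvent : ∀ (G : Finset (Fin 3 → ℤ)), MeasurableSet {ω | r i ω ∈ S ∧
        ∀ k ∈ G, ε < dist (latt i + r i ω) (latt k + r k ω)} := by
      intro G
      have : {ω | r i ω ∈ S ∧ ∀ k ∈ G, ε < dist (latt i + r i ω) (latt k + r k ω)}
          = (r i ⁻¹' S) ∩ ⋂ k ∈ G, {ω | ε < dist (latt i + r i ω) (latt k + r k ω)} := by
        ext ω; simp [Set.mem_iInter]
      rw [this]
      exact ((hmeas i) hS).inter (MeasurableSet.biInter G.countable_toSet fun k _ =>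
        measurableSet_lt measurable_const
          ((measurable_const.add (hmeas i)).dist (measurable_const.add (hmeas k))))
    have hEF : MeasurableSet EF := measEvent F
    have hE' : MeasurableSet E' := measEvent (insert k₀ F)
    have hmemE' : ∀ ω, ω ∈ E' ↔ (g ω, r k₀ ω) ∈ A := by
      intro ω
      simp only [hE'_def, hA_def, hB_def, Set.mem_setOf_eq, Set.mem_inter_iff,
        Set.mem_iInter, Finset.forall_mem_insert, hg_def, Subtype.forall]
      tauto
    have hmemEF : ∀ ω, ω ∈ EF ↔ g ω ∈ B := by
      intro ω
      simp only [hEF_def, hB_def, Set.mem_setOf_eq, Set.mem_inter_iff,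
        Set.mem_iInter, hg_def, Subtype.forall]
    have hfunA : Measurable (A.indicator (fun q => f q.1.1)) :=
      Measurable.indicator (by fun_prop) hA
    set h₂ : E3 × ({x // x ∈ F} → E3) → ℝ≥0∞ :=
      fun p => f p.1 * (1 - ν (Metric.closedBall (c p.1) ε)) with hh₂_def
    have hmeash₂ : Measurable h₂ :=
      (hf.comp measurable_fst).mul
        (measurable_const.sub ((measurable_ballMeas ν c hc ε).comp measurable_fst))
    have hfunB : Measurable (B.indicator h₂) := hmeash₂.indicator hB
    have step1 : ∫⁻ ω in E', f (r i ω) ∂P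
        = ∫⁻ q, A.indicator (fun q => f q.1.1) q ∂(P.map (fun ω => (g ω, r k₀ ω))) := by
      rw [lintegral_map hfunA (hg.prodMk (hmeas k₀)), ← lintegral_indicator hE']
      apply lintegral_congr
      intro ω
      by_cases hω : ω ∈ E'
      · rw [Set.indicator_of_mem hω, Set.indicator_of_mem ((hmemE' ω).mp hω)]
      · rw [Set.indicator_of_notMem hω,
          Set.indicator_of_notMem (fun h => hω ((hmemE' ω).mpr h))]
    have hdist : ∀ (y z : E3), dist (latt i + y) (latt k₀ + z) = dist z (c y) := by
      intro y z
      rw [dist_comm, dist_eq_norm, dist_eq_norm]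
      congr 1
      simp only [hc_def]
      abel
    have hcompl : ∀ y : E3, {z : E3 | ε < dist (latt i + y) (latt k₀ + z)}
        = (Metric.closedBall (c y) ε)ᶜ := by
      intro y
      ext z
      simp [Metric.mem_closedBall, hdist y z, not_le]
    have step2 : ∫⁻ q, A.indicator (fun q => f q.1.1) q ∂((P.map g).prod ν)
        = ∫⁻ p, B.indicator h₂ p ∂(P.map g) := by
      rw [lintegral_prod _ hfunA.aemeasurable]
      apply lintegral_congr
      intro p
      by_cases hp : p ∈ B
      · rw [Set.indicator_of_mem hp]
        have hzz : ∀ z, A.indicator (fun q => f q.1.1) (p, z)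
            = ((Metric.closedBall (c p.1) ε)ᶜ).indicator (fun _ => f p.1) z := by
          intro z
          rw [← hcompl p.1]
          by_cases hz : ε < dist (latt i + p.1) (latt k₀ + z)
          · rw [Set.indicator_of_mem (by exact ⟨hp, hz⟩), Set.indicator_of_mem (by exact hz)]
          · rw [Set.indicator_of_notMem (fun h => hz h.2),
              Set.indicator_of_notMem (by exact hz)]
        rw [lintegral_congr hzz, lintegral_indicator measurableSet_closedBall.compl,
          setLIntegral_const, measure_compl measurableSet_closedBall (measure_ne_top ν _),
          measure_univ]
        try simp [hh₂_def, mul_comm]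
      · rw [Set.indicator_of_notMem hp]
        have hzz : ∀ z, A.indicator (fun q => f q.1.1) (p, z) = 0 := by
          intro z
          exact Set.indicator_of_notMem (fun h => hp h.1) _
        simp [lintegral_congr hzz]
    have step3 : ∫⁻ p, B.indicator h₂ p ∂(P.map g)
        = ∫⁻ ω in EF, (fun y => f y * (1 - ν (Metric.closedBall (c y) ε))) (r i ω) ∂P := by
      rw [lintegral_map hfunB hg, ← lintegral_indicator hEF]
      apply lintegral_congr
      intro ω
      by_cases hω : ω ∈ EF
      · rw [Set.indicator_of_mem ((hmemEF ω).mp hω), Set.indicator_of_mem hω]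
      · rw [Set.indicator_of_notMem (fun h => hω ((hmemEF ω).mpr h)),
          Set.indicator_of_notMem hω]
    have hf' : Measurable fun y => f y * (1 - ν (Metric.closedBall (c y) ε)) :=
      hf.mul (measurable_const.sub (measurable_ballMeas ν c hc ε))
    calc ∫⁻ ω in E', f (r i ω) ∂P
        = ∫⁻ p, B.indicator h₂ p ∂(P.map g) := by rw [step1, hmap, step2]
      _ = ∫⁻ ω in EF, (fun y => f y * (1 - ν (Metric.closedBall (c y) ε))) (r i ω) ∂P := step3
      _ = ∫⁻ y in S, (f y * (1 - ν (Metric.closedBall (c y) ε)))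
            * ∏ k ∈ F, (1 - ν (Metric.closedBall (latt i + y - latt k) ε)) ∂ν :=
          ih hiF _ hf'
      _ = ∫⁻ y in S, f y * ∏ k ∈ insert k₀ F,
            (1 - ν (Metric.closedBall (latt i + y - latt k) ε)) ∂ν := by
          apply lintegral_congr
          intro y
          rw [Finset.prod_insert hk₀F, hc_def]
          ring

/-- If the `r_j` are independent with common law `ν`, then for every
`i ∈ ℤ³` and `ε > 0`,
`P(i + r_i ∈ W and δ_i > ε) ≤ ∫_{W−i} exp(−Σ_{k ≠ i} ν(B̄_ε(i + y − k))) dν(y)`. -/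
theorem prob_delta_large_bound
    (ν : Measure E3) [IsProbabilityMeasure ν]
    {Ω : Type*} [MeasurableSpace Ω] (P : Measure Ω) [IsProbabilityMeasure P]
    (r : (Fin 3 → ℤ) → Ω → E3) (hmeas : ∀ j, Measurable (r j))
    (hindep : iIndepFun r P)
    (hlaw : ∀ j, P.map (r j) = ν)
    (i : Fin 3 → ℤ) (ε : ℝ) (hε : 0 < ε) :
    P {ω | latt i + r i ω ∈ Wcube ∧ ENNReal.ofReal ε < nnd r i ω}
      ≤ ∫⁻ y in (fun x => x + latt i) ⁻¹' Wcube,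
          eexp (∑' k : {k : Fin 3 → ℤ // k ≠ i},
            ν (Metric.closedBall (latt i + y - latt (k : Fin 3 → ℤ)) ε)) ∂ν := by
  classical
  set S : Set E3 := (fun x => x + latt i) ⁻¹' Wcube with hSdef
  have hW : MeasurableSet Wcube := by
    have hWeq : Wcube = ⋂ j : Fin 3, (fun x : E3 => x j) ⁻¹' (Set.Ico (-(1:ℝ)/2) (1/2)) := by
      ext x; simp [Wcube, Set.mem_iInter, Set.mem_Ico]
    rw [hWeq]
    exact MeasurableSet.iInter fun j =>
      ((EuclideanSpace.proj (𝕜 := ℝ) j).continuous.measurable) measurableSet_Ico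
  have hS : MeasurableSet S := hW.preimage (measurable_id.add_const _)
  have htk : ∀ k : Fin 3 → ℤ, Measurable fun y => ν (Metric.closedBall (latt i + y - latt k) ε) :=
    fun k => measurable_ballMeas ν _ ((measurable_const.add measurable_id).sub measurable_const) ε
  have hInf : Infinite {k : Fin 3 → ℤ // k ≠ i} := by
    refine Infinite.of_injective (fun n : ℕ => (⟨fun j => i j + (n+1), ?_⟩ :
      {k : Fin 3 → ℤ // k ≠ i})) ?_
    · intro h
      have := congrFun h 0
      omega
    · intro m n hmn
      have h1 : (fun j => i j + ((m:ℤ)+1)) = (fun j => i j + ((n:ℤ)+1)) :=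
        congrArg Subtype.val hmn
      have := congrFun h1 0
      omega
  obtain ⟨e⟩ : Nonempty (ℕ ≃ {k : Fin 3 → ℤ // k ≠ i}) := nonempty_equiv_of_countable
  set F : ℕ → Finset (Fin 3 → ℤ) := fun n => (Finset.range n).image (fun m => (e m).1) with hF_def
  have hIm : ∀ n, ∀ k ∈ F n, k ≠ i := by
    intro n k hk
    simp only [hF_def, Finset.mem_image, Finset.mem_range] at hk
    obtain ⟨m, _, rfl⟩ := hk
    exact (e m).2
  have hiF : ∀ n, i ∉ F n := fun n h => hIm n i h rfl
  have hFmono : Monotone F := fun a b hab =>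
    Finset.image_subset_image (Finset.range_subset_range.mpr hab)
  set s : ℕ → E3 → ℝ≥0∞ :=
    fun n y => ∑ k ∈ F n, ν (Metric.closedBall (latt i + y - latt k) ε) with hs_def
  have hs_fin : ∀ n y, s n y ≠ ⊤ :=
    fun n y => (ENNReal.sum_lt_top.mpr fun k _ => (measure_ne_top ν _).lt_top).ne
  have hs_tend : ∀ y, Tendsto (fun n => s n y) atTop
      (𝓝 (∑' k : {k : Fin 3 → ℤ // k ≠ i},
        ν (Metric.closedBall (latt i + y - latt (k : Fin 3 → ℤ)) ε))) := by
    intro y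
    have h1 : ∀ n, s n y
        = ∑ m ∈ Finset.range n, ν (Metric.closedBall (latt i + y - latt (e m).1) ε) := by
      intro n
      rw [hs_def]
      refine Finset.sum_image ?_
      intro a _ b _ hab
      exact e.injective (Subtype.coe_injective hab)
    have h2 := ENNReal.tendsto_nat_tsum
      (fun m => ν (Metric.closedBall (latt i + y - latt (e m).1) ε))
    have h3 : ∑' m : ℕ, ν (Metric.closedBall (latt i + y - latt (e m).1) ε)
        = ∑' k : {k : Fin 3 → ℤ // k ≠ i},
            ν (Metric.closedBall (latt i + y - latt (k : Fin 3 → ℤ)) ε) :=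
      e.tsum_eq (fun k => ν (Metric.closedBall (latt i + y - latt (k : Fin 3 → ℤ)) ε))
    rw [← h3]
    simp_rw [h1]
    exact h2
  have hpoint : ∀ y, ⨅ n, eexp (s n y)
      = eexp (∑' k : {k : Fin 3 → ℤ // k ≠ i},
          ν (Metric.closedBall (latt i + y - latt (k : Fin 3 → ℤ)) ε)) := by
    intro y
    have h2 := eexp_tendsto (fun n => hs_fin n y) (hs_tend y)
    have hanti : Antitone fun n => eexp (s n y) := fun a b hab =>
      eexp_anti (Finset.sum_le_sum_of_subset (hFmono hab))
    exact tendsto_nhds_unique (tendsto_atTop_iInf hanti) h2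
  have hs_meas : ∀ n, Measurable fun y => eexp (s n y) := fun n =>
    measurable_eexp.comp (Finset.measurable_sum _ fun k _ => htk k)
  have hs_anti : Antitone fun n => (fun y => eexp (s n y)) := fun a b hab y =>
    eexp_anti (Finset.sum_le_sum_of_subset (hFmono hab))
  have hmain : ∀ n, P {ω | latt i + r i ω ∈ Wcube ∧ ENNReal.ofReal ε < nnd r i ω}
      ≤ ∫⁻ y in S, eexp (s n y) ∂ν := by
    intro n
    have hsub : {ω | latt i + r i ω ∈ Wcube ∧ ENNReal.ofReal ε < nnd r i ω}
        ⊆ {ω | r i ω ∈ S ∧ ∀ k ∈ F n, ε < dist (latt i + r i ω) (latt k + r k ω)} := by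
      rintro ω ⟨h1, h2⟩
      constructor
      · show r i ω + latt i ∈ Wcube
        rwa [add_comm]
      · intro k hk
        have hki : k ≠ i := hIm n k hk
        have h3 : ENNReal.ofReal ε < edist (latt i + r i ω) (latt k + r k ω) :=
          lt_of_lt_of_le h2 (iInf_le _ (⟨k, hki⟩ : {k : Fin 3 → ℤ // k ≠ i}))
        rw [edist_dist] at h3
        exact (ENNReal.ofReal_lt_ofReal_iff_of_nonneg hε.le).mp h3
    calc P {ω | latt i + r i ω ∈ Wcube ∧ ENNReal.ofReal ε < nnd r i ω}
        ≤ P {ω | r i ω ∈ S ∧ ∀ k ∈ F n, ε < dist (latt i + r i ω) (latt k + r k ω)} :=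
          measure_mono hsub
      _ = ∫⁻ ω in {ω | r i ω ∈ S ∧ ∀ k ∈ F n,
            ε < dist (latt i + r i ω) (latt k + r k ω)}, (fun _ => (1:ℝ≥0∞)) (r i ω) ∂P :=
          (setLIntegral_one _).symm
      _ = ∫⁻ y in S, (fun _ => (1:ℝ≥0∞)) y
            * ∏ k ∈ F n, (1 - ν (Metric.closedBall (latt i + y - latt k) ε)) ∂ν :=
          key_eq ν P r hmeas hindep hlaw i ε S hS (F n) (hiF n) _ measurable_const
      _ ≤ ∫⁻ y in S, eexp (s n y) ∂ν := by
          apply lintegral_mono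
          intro y
          simp only [one_mul]
          exact prod_one_sub_le_eexp_sum _ _ (fun k => measure_ne_top ν _)
  have hne : ∫⁻ y in S, eexp (s 0 y) ∂ν ≠ ⊤ := by
    have h0 : ∀ y, eexp (s 0 y) = 1 := by
      intro y
      simp [hs_def, hF_def, eexp, Real.exp_zero]
    rw [lintegral_congr h0]
    simp [measure_ne_top]
  calc P {ω | latt i + r i ω ∈ Wcube ∧ ENNReal.ofReal ε < nnd r i ω}
      ≤ ⨅ n, ∫⁻ y in S, eexp (s n y) ∂ν := le_iInf hmain
    _ = ∫⁻ y in S, ⨅ n, eexp (s n y) ∂ν := (lintegral_iInf hs_meas hs_anti hne).symm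
    _ = ∫⁻ y in S, eexp (∑' k : {k : Fin 3 → ℤ // k ≠ i},
          ν (Metric.closedBall (latt i + y - latt (k : Fin 3 → ℤ)) ε)) ∂ν :=
        lintegral_congr fun y => hpoint y
end
end
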